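/- If deg(g) = n, then Ω(α,β,γ,λ,g) is a free U(H)-module of rank n+1, with basis {1, t, …, t^n}, where H = ℂL₀⊕ℂd₀. -/

import Mathlib

/- STATEMENT 13: if `deg g = n`, then `Ω(α,β,γ,λ,g)` is a free `U(H)`-module of rank `n+1` with basis `{1, t, …, t^n}`, where `H = ℂL₀ ⊕ ℂd₀`: the map `U(H)^{n+1} ≅ ℂ[u₀,u₁]^{n+1} → Ω`, `(p_k) ↦ Σ_k p_k(L₀, d₀)·t^k`, is bijective. -/
noncomputable section

open Polynomial

/-- `Ω = ℂ[s,t]`, realized as `(ℂ[s])[t]`: the outer variable is `t`,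
the inner variable is `s`. -/
abbrev Om : Type := Polynomial (Polynomial ℂ)

/-- substitution `s ↦ s - n` (leaving `t` fixed). -/
noncomputable def shS (n : ℤ) (f : Om) : Om :=
  Polynomial.map ((Polynomial.aeval (Polynomial.X - Polynomial.C (n : ℂ))).toRingHom) f

/-- a polynomial `g(t) ∈ ℂ[t]` viewed in `Ω`. -/
noncomputable def tPoly (g : Polynomial ℂ) : Om := g.map (Polynomial.C : ℂ →+* Polynomial ℂ)

/-- action of `L_n`: `f(s,t) ↦ λ^n (s + nα) f(s-n, t)`. -/
noncomputable def wL (α lam : ℂ) (n : ℤ) (f : Om) : Om :=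
  (lam ^ n) • (Polynomial.C (Polynomial.X + Polynomial.C ((n : ℂ) * α)) * shS n f)

/-- action of `d_n`: `f ↦ λ^n β⁻¹ (t g(t) + γ) f(s-n,t) + λ^n t ∂_t f(s-n,t)`. -/
noncomputable def wD (β γ lam : ℂ) (g : Polynomial ℂ) (n : ℤ) (f : Om) : Om :=
  (lam ^ n * β⁻¹) • ((Polynomial.X * tPoly g + Polynomial.C (Polynomial.C γ)) * shS n f)
    + (lam ^ n) • (Polynomial.X * Polynomial.derivative (shS n f))

/-- action of `a_n`: `f ↦ λ^n t f(s-n,t)`. -/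
noncomputable def wA (lam : ℂ) (n : ℤ) (f : Om) : Om :=
  (lam ^ n) • (Polynomial.X * shS n f)

/-- action of `b_n`: `f ↦ λ^n g(t) f(s-n,t) + λ^n β ∂_t f(s-n,t)`. -/
noncomputable def wB (β lam : ℂ) (g : Polynomial ℂ) (n : ℤ) (f : Om) : Om :=
  (lam ^ n) • (tPoly g * shS n f) + (lam ^ n * β) • Polynomial.derivative (shS n f)

/-- action of `c_n`: `f ↦ -λ^n β f(s-n,t)`. -/
noncomputable def wC (β lam : ℂ) (n : ℤ) (f : Om) : Om :=
  (-(lam ^ n) * β) • shS n f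

/-! ### Auxiliary lemmas -/

lemma shS_zero (f : Om) : shS 0 f = f := by simp [shS]

lemma wL_zero (α lam : ℂ) (f : Om) : wL α lam 0 f = C X * f := by
  simp [wL, shS_zero]

lemma wL_iter (α lam : ℂ) (i : ℕ) (f : Om) : (wL α lam 0)^[i] f = C (X ^ i) * f := by
  induction i with
  | zero => simp
  | succ m ih => rw [Function.iterate_succ_apply', ih, wL_zero, pow_succ, map_mul]; ring

lemma wD_zero (β γ lam : ℂ) (g : Polynomial ℂ) (f : Om) :
    wD β γ lam g 0 f = β⁻¹ • ((X * tPoly g + C (C γ)) * f) + X * derivative f := by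
  simp [wD, shS_zero]

lemma smul_eq_CC (c : ℂ) (f : Om) : c • f = C (C c) * f := by
  ext k
  simp [coeff_smul, coeff_C_mul, Polynomial.smul_eq_C_mul]

lemma tPoly_natDegree (g : Polynomial ℂ) : (tPoly g).natDegree = g.natDegree :=
  natDegree_map_eq_of_injective (C_injective) g

lemma tPoly_leadingCoeff (g : Polynomial ℂ) : (tPoly g).leadingCoeff = C g.leadingCoeff :=
  leadingCoeff_map_of_injective (C_injective) g

lemma tPoly_ne (g : Polynomial ℂ) (hg : g ≠ 0) : tPoly g ≠ 0 := by
  intro h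
  exact hg (Polynomial.map_injective _ C_injective (by simpa [tPoly] using h))

lemma D_deg (β γ lam : ℂ) (g : Polynomial ℂ) (hβ : β ≠ 0) (hg : g ≠ 0)
    (f : Om) (hf : f ≠ 0) (a : ℂ) (hlc : f.leadingCoeff = C a) :
    wD β γ lam g 0 f ≠ 0 ∧ (wD β γ lam g 0 f).natDegree = f.natDegree + (g.natDegree + 1)
      ∧ (wD β γ lam g 0 f).leadingCoeff = C (β⁻¹ * g.leadingCoeff * a) := by
  have hA : wD β γ lam g 0 f = (C (C β⁻¹) * (X * tPoly g) * f) + (C (C (β⁻¹ * γ)) * f + X * derivative f) := by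
    rw [wD_zero, smul_eq_CC]; push_cast [map_mul]; ring
  set A : Om := C (C β⁻¹) * (X * tPoly g) * f with hAdef
  set E : Om := C (C (β⁻¹ * γ)) * f + X * derivative f with hEdef
  have hAne : A ≠ 0 := by
    simp only [hAdef]
    refine mul_ne_zero (mul_ne_zero (by simpa using hβ) (mul_ne_zero X_ne_zero (tPoly_ne g hg))) hf
  have hCne : (C (C β⁻¹) : Om) ≠ 0 := by simpa using hβ
  have hXG : (X * tPoly g : Om) ≠ 0 := mul_ne_zero X_ne_zero (tPoly_ne g hg)
  have hAdeg : A.natDegree = f.natDegree + (g.natDegree + 1) := by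
    rw [hAdef, natDegree_mul (mul_ne_zero hCne hXG) hf,
      natDegree_C_mul (show (C β⁻¹ : Polynomial ℂ) ≠ 0 by simpa using hβ),
      natDegree_mul X_ne_zero (tPoly_ne g hg), natDegree_X, tPoly_natDegree]
    ring
  have hEdeg : E.natDegree ≤ f.natDegree := by
    refine le_trans (natDegree_add_le _ _) (max_le (le_trans (natDegree_C_mul_le _ _) le_rfl) ?_)
    by_cases hd : derivative f = 0
    · simp [hd]
    · have h1 : f.natDegree ≠ 0 := by
        intro h0
        obtain ⟨a', ha'⟩ := natDegree_eq_zero.mp h0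
        rw [← ha'] at hd
        simp at hd
      rw [natDegree_mul X_ne_zero hd, natDegree_X]
      have := natDegree_derivative_le f
      omega
  have hlt : E.degree < A.degree := degree_lt_degree (by omega)
  have hsum : wD β γ lam g 0 f = E + A := by rw [hA]; ring
  have hdeg2 : (E + A).degree = A.degree := degree_add_eq_right_of_degree_lt hlt
  have hlcA : A.leadingCoeff = C (β⁻¹ * g.leadingCoeff * a) := by
    rw [hAdef, leadingCoeff_mul, leadingCoeff_mul, leadingCoeff_C, leadingCoeff_mul,
      tPoly_leadingCoeff, leadingCoeff_X, hlc]
    push_cast [map_mul]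
    ring
  refine ⟨?_, ?_, ?_⟩
  · rw [hsum]
    intro h
    rw [h] at hdeg2
    exact hAne (degree_eq_bot.mp hdeg2.symm)
  · rw [hsum, natDegree_eq_of_degree_eq hdeg2, hAdeg]
  · rw [hsum, leadingCoeff_add_of_degree_lt hlt, hlcA]

lemma Bp_spec (β γ lam : ℂ) (g : Polynomial ℂ) (hβ : β ≠ 0) (hg : g ≠ 0) (j k : ℕ) :
    (wD β γ lam g 0)^[j] (X ^ k) ≠ 0 ∧
    ((wD β γ lam g 0)^[j] (X ^ k)).natDegree = k + j * (g.natDegree + 1) ∧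
    ((wD β γ lam g 0)^[j] (X ^ k)).leadingCoeff = C ((β⁻¹ * g.leadingCoeff) ^ j) := by
  induction j with
  | zero =>
    refine ⟨pow_ne_zero _ X_ne_zero, ?_, ?_⟩
    · simp
    · simp [leadingCoeff_X_pow]
  | succ m ih =>
    obtain ⟨h1, h2, h3⟩ := ih
    have hD := D_deg β γ lam g hβ hg _ h1 _ h3
    rw [Function.iterate_succ_apply']
    refine ⟨hD.1, ?_, ?_⟩
    · rw [hD.2.1, h2]; ring
    · rw [hD.2.2, ← pow_succ']

lemma dec_unique {n k k' j j' : ℕ} (hk : k < n + 1) (hk' : k' < n + 1)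
    (h : k + j * (n + 1) = k' + j' * (n + 1)) : k = k' ∧ j = j' := by
  have h1 : k = (k + j * (n + 1)) % (n + 1) := by
    rw [Nat.add_mul_mod_self_right, Nat.mod_eq_of_lt hk]
  have h2 : k' = (k' + j' * (n + 1)) % (n + 1) := by
    rw [Nat.add_mul_mod_self_right, Nat.mod_eq_of_lt hk']
  have hkk : k = k' := by rw [h1, h, ← h2]
  subst hkk
  have : j * (n + 1) = j' * (n + 1) := by omega
  exact ⟨rfl, Nat.eq_of_mul_eq_mul_right (Nat.succ_pos n) this⟩

theorem Omega_UH_free_rank_degree_add_one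
    (α γ β lam : ℂ) (hβ : β ≠ 0) (hlam : lam ≠ 0)
    (g : Polynomial ℂ) (n : ℕ) (hg : g ≠ 0) (hdeg : g.natDegree = n) :
    Function.Bijective (fun q : Fin (n + 1) → MvPolynomial (Fin 2) ℂ =>
      ∑ k : Fin (n + 1), Finsupp.sum (AddMonoidAlgebra.coeff (q k)) fun mo c =>
        c • ((wL α lam 0)^[mo 0] ((wD β γ lam g 0)^[mo 1]
          ((Polynomial.X : Om) ^ (k : ℕ)))) ) := by
  subst hdeg
  set n := g.natDegree with hn
  set c0 : ℂ := β⁻¹ * g.leadingCoeff with hc0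
  have hc0ne : c0 ≠ 0 := mul_ne_zero (inv_ne_zero hβ) (leadingCoeff_ne_zero.mpr hg)
  set Bp : ℕ → ℕ → Om := fun j k => (wD β γ lam g 0)^[j] (X ^ k) with hBp
  set Φ : (Fin (n + 1) → MvPolynomial (Fin 2) ℂ) → Om := fun q =>
      ∑ k : Fin (n + 1), Finsupp.sum (AddMonoidAlgebra.coeff (q k)) fun mo c =>
        c • ((wL α lam 0)^[mo 0] ((wD β γ lam g 0)^[mo 1]
          ((Polynomial.X : Om) ^ (k : ℕ))))  with hΦ
  have hBne : ∀ j k, Bp j k ≠ 0 := fun j k => (Bp_spec β γ lam g hβ hg j k).1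
  have hBdeg : ∀ j k, (Bp j k).natDegree = k + j * (n + 1) :=
    fun j k => (Bp_spec β γ lam g hβ hg j k).2.1
  have hBlc : ∀ j k, (Bp j k).leadingCoeff = C (c0 ^ j) :=
    fun j k => (Bp_spec β γ lam g hβ hg j k).2.2
  -- rewrite the generic term
  have hterm : ∀ (c : ℂ) (i j k : ℕ),
      c • ((wL α lam 0)^[i] ((wD β γ lam g 0)^[j] ((X : Om) ^ k)))
        = c • (C (X ^ i) * Bp j k) := by
    intro c i j k
    rw [wL_iter]
  -- additivity / subtractivity of Φ
  have hsub : ∀ q1 q2, Φ (q1 - q2) = Φ q1 - Φ q2 := by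
    intro q1 q2
    simp only [hΦ, ← Finset.sum_sub_distrib]
    refine Finset.sum_congr rfl fun k _ => ?_
    have : AddMonoidAlgebra.coeff ((q1 - q2) k) = AddMonoidAlgebra.coeff (q1 k) - AddMonoidAlgebra.coeff (q2 k) := rfl
    rw [this]
    exact Finsupp.sum_sub_index (fun mo c1 c2 => sub_smul c1 c2 _)
  have hadd : ∀ q1 q2, Φ (q1 + q2) = Φ q1 + Φ q2 := by
    intro q1 q2
    simp only [hΦ, ← Finset.sum_add_distrib]
    refine Finset.sum_congr rfl fun k _ => ?_
    have : AddMonoidAlgebra.coeff ((q1 + q2) k) = AddMonoidAlgebra.coeff (q1 k) + AddMonoidAlgebra.coeff (q2 k) := rfl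
    rw [this]
    exact Finsupp.sum_add_index' (fun mo => zero_smul ℂ _) (fun mo c1 c2 => add_smul c1 c2 _)
  have hzero : Φ 0 = 0 := by
    simp only [hΦ]
    refine Finset.sum_eq_zero fun k _ => ?_
    have : AddMonoidAlgebra.coeff ((0 : Fin (n + 1) → MvPolynomial (Fin 2) ℂ) k) = 0 := rfl
    rw [this]
    exact Finsupp.sum_zero_index
  constructor
  · -- injectivity
    have hinj0 : ∀ q, Φ q = 0 → q = 0 := by
      intro q hq
      by_contra hne
      obtain ⟨k1, hk1⟩ := Function.ne_iff.mp hne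
      set F : Finset ℕ := Finset.univ.biUnion
        (fun k : Fin (n + 1) => (q k).support.image fun mo => (k : ℕ) + mo 1 * (n + 1)) with hF
      have hFne : F.Nonempty := by
        obtain ⟨mo, hmo⟩ := (Finsupp.support_nonempty_iff (f := AddMonoidAlgebra.coeff (q k1))).mpr (by simpa using hk1)
        exact ⟨(k1 : ℕ) + mo 1 * (n + 1), Finset.mem_biUnion.mpr
          ⟨k1, Finset.mem_univ _, Finset.mem_image.mpr ⟨mo, hmo, rfl⟩⟩⟩
      set d := F.max' hFne with hd
      obtain ⟨k0, _, hmem⟩ := Finset.mem_biUnion.mp (F.max'_mem hFne)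
      obtain ⟨mo0, hmo0supp, hmo0⟩ := Finset.mem_image.mp hmem
      rw [← hd] at hmo0
      set i0 := mo0 0 with hi0
      set j0 := mo0 1 with hj0
      have hbound : ∀ (k : Fin (n + 1)), ∀ mo ∈ (q k).support,
          (k : ℕ) + mo 1 * (n + 1) ≤ d := by
        intro k mo hmo
        exact F.le_max' _ (Finset.mem_biUnion.mpr
          ⟨k, Finset.mem_univ _, Finset.mem_image.mpr ⟨mo, hmo, rfl⟩⟩)
      have hE := congrArg (fun f : Om => (f.coeff d).coeff i0) hq
      simp only [coeff_zero] at hE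
      have hexp : ((Φ q).coeff d).coeff i0
          = ∑ k : Fin (n + 1), ∑ mo ∈ (q k).support,
              MvPolynomial.coeff mo (q k) * ((X ^ (mo 0) * (Bp (mo 1) (k : ℕ)).coeff d).coeff i0) := by
        simp only [hΦ, finset_sum_coeff, finset_sum_coeff (R := ℂ)]
        refine Finset.sum_congr rfl fun k _ => ?_
        rw [Finsupp.sum]
        rw [finset_sum_coeff, finset_sum_coeff (R := ℂ)]
        refine Finset.sum_congr rfl fun mo _ => ?_
        rw [hterm, coeff_smul, coeff_C_mul, coeff_smul, smul_eq_mul]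
        rfl
      rw [hexp] at hE
      have hzero_term : ∀ (k : Fin (n + 1)), ∀ mo ∈ (q k).support,
          (k ≠ k0 ∨ mo ≠ mo0) →
          MvPolynomial.coeff mo (q k) * ((X ^ (mo 0) * (Bp (mo 1) (k : ℕ)).coeff d).coeff i0) = 0 := by
        intro k mo hmo hne'
        rcases lt_or_eq_of_le (hbound k mo hmo) with hlt | heq
        · have : (Bp (mo 1) (k : ℕ)).coeff d = 0 :=
            coeff_eq_zero_of_natDegree_lt (by rw [hBdeg]; exact hlt)
          rw [this, mul_zero, Polynomial.coeff_zero, mul_zero]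
        · -- degrees match: k = k0, mo 1 = j0, and then mo 0 ≠ i0
          have hkk : (k : ℕ) = (k0 : ℕ) ∧ mo 1 = j0 := by
            have hx := heq.trans hmo0.symm
            exact dec_unique (k.isLt) (k0.isLt) hx
          have hk : k = k0 := Fin.ext hkk.1
          have hmo1 : mo 1 = j0 := hkk.2
          have hmo0ne : mo 0 ≠ i0 := by
            intro h0
            apply hne'.resolve_left (by simp [hk])
            ext x
            fin_cases x
            · exact h0
            · exact hmo1
          have hcoe : (Bp (mo 1) (k : ℕ)).coeff d = C (c0 ^ j0) := by
            rw [hmo1, hk]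
            have : d = (Bp j0 (k0 : ℕ)).natDegree := by rw [hBdeg, ← hmo0]
            rw [this, coeff_natDegree, hBlc]
          rw [hcoe]
          have : ((X : Polynomial ℂ) ^ (mo 0) * C (c0 ^ j0)).coeff i0 = 0 := by
            rw [mul_comm, coeff_C_mul, coeff_X_pow, if_neg (fun h => hmo0ne h.symm), mul_zero]
          rw [this, mul_zero]
      have hsum1 : ∑ k : Fin (n + 1), ∑ mo ∈ (q k).support,
          MvPolynomial.coeff mo (q k) * ((X ^ (mo 0) * (Bp (mo 1) (k : ℕ)).coeff d).coeff i0)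
          = MvPolynomial.coeff mo0 (q k0) * ((X ^ i0 * (Bp j0 (k0 : ℕ)).coeff d).coeff i0) := by
        rw [Finset.sum_eq_single_of_mem k0 (Finset.mem_univ _)]
        · rw [Finset.sum_eq_single_of_mem mo0 hmo0supp]
          intro mo hmo hne'
          exact hzero_term k0 mo hmo (Or.inr hne')
        · intro k _ hne'
          refine Finset.sum_eq_zero fun mo hmo => hzero_term k mo hmo (Or.inl hne')
      rw [hsum1] at hE
      have hcoe : (Bp j0 (k0 : ℕ)).coeff d = C (c0 ^ j0) := by
        have : d = (Bp j0 (k0 : ℕ)).natDegree := by rw [hBdeg, ← hmo0]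
        rw [this, coeff_natDegree, hBlc]
      rw [hcoe, mul_comm ((X : Polynomial ℂ) ^ i0), coeff_C_mul, coeff_X_pow, if_pos rfl,
        mul_one] at hE
      have hq0 : MvPolynomial.coeff mo0 (q k0) ≠ 0 := MvPolynomial.mem_support_iff.mp hmo0supp
      exact (mul_ne_zero hq0 (pow_ne_zero _ hc0ne)) hE
    intro q1 q2 h
    have h' : Φ (q1 - q2) = 0 := by
      rw [hsub, sub_eq_zero]
      exact h
    have := hinj0 _ h'
    exact sub_eq_zero.mp this
  · -- surjectivity
    have hsingle : ∀ (c : ℂ) (i j k : ℕ) (hk : k < n + 1),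
        ∃ q, Φ q = c • (C (X ^ i) * Bp j k) := by
      intro c i j k hk
      refine ⟨Pi.single ⟨k, hk⟩ (AddMonoidAlgebra.ofCoeff (Finsupp.single (Finsupp.single 0 i + Finsupp.single 1 j) c :
        (Fin 2 →₀ ℕ) →₀ ℂ) : MvPolynomial (Fin 2) ℂ), ?_⟩
      simp only [hΦ]
      rw [Finset.sum_eq_single_of_mem ⟨k, hk⟩ (Finset.mem_univ _)]
      · rw [Pi.single_eq_same, AddMonoidAlgebra.coeff_ofCoeff]
        rw [Finsupp.sum_single_index (by exact zero_smul ℂ _)]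
        rw [hterm]
        congr 2
        · simp
        · simp [hBp]
      · intro k' _ hne'
        rw [Pi.single_eq_of_ne hne']
        exact Finsupp.sum_zero_index
    have hsum_mem : ∀ (s : Finset ℕ) (F : ℕ → Om),
        (∀ i ∈ s, ∃ q, Φ q = F i) → ∃ q, Φ q = ∑ i ∈ s, F i := by
      intro s F hF
      induction s using Finset.induction_on with
      | empty => exact ⟨0, by simpa using hzero⟩
      | @insert x s' hx ih =>
        obtain ⟨q1, hq1⟩ := hF x (Finset.mem_insert_self x s')
        obtain ⟨q2, hq2⟩ := ih (fun i hi => hF i (Finset.mem_insert_of_mem hi))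
        exact ⟨q1 + q2, by rw [hadd, hq1, hq2, Finset.sum_insert hx]⟩
    have hCp : ∀ (p : Polynomial ℂ) (j k : ℕ) (hk : k < n + 1),
        ∃ q, Φ q = C p * Bp j k := by
      intro p j k hk
      have hrepr : C p * Bp j k = ∑ i ∈ p.support, (p.coeff i) • (C (X ^ i) * Bp j k) := by
        conv_lhs => rw [p.as_sum_support]
        rw [map_sum, Finset.sum_mul]
        refine Finset.sum_congr rfl fun i _ => ?_
        rw [smul_eq_CC, ← mul_assoc, ← map_mul, C_mul_X_pow_eq_monomial]
      rw [hrepr]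
      exact hsum_mem _ _ (fun i _ => hsingle (p.coeff i) i j k hk)
    have main : ∀ d : ℕ, ∀ f : Om, f.natDegree = d → ∃ q, Φ q = f := by
      intro d
      induction d using Nat.strong_induction_on with
      | _ d IH =>
        intro f hf
        by_cases h0 : f = 0
        · exact ⟨0, by rw [hzero, h0]⟩
        · set k := d % (n + 1) with hk
          set j := d / (n + 1) with hj
          have hkd : k + j * (n + 1) = d := Nat.mod_add_div' d (n + 1)
          have hklt : k < n + 1 := Nat.mod_lt _ (Nat.succ_pos n)
          set p : Polynomial ℂ := (c0 ^ j)⁻¹ • f.leadingCoeff with hp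
          set G : Om := C p * Bp j k with hG
          have hpne : p ≠ 0 := by
            rw [hp]
            exact smul_ne_zero (inv_ne_zero (pow_ne_zero _ hc0ne)) (leadingCoeff_ne_zero.mpr h0)
          have hGne : G ≠ 0 := mul_ne_zero (by simpa using hpne) (hBne j k)
          have hGdeg : G.natDegree = d := by
            rw [hG, natDegree_C_mul hpne, hBdeg, hkd]
          have hGlc : G.leadingCoeff = f.leadingCoeff := by
            rw [hG, leadingCoeff_mul, leadingCoeff_C, hBlc, hp]
            rw [mul_comm, ← Polynomial.smul_eq_C_mul, smul_smul,
              mul_inv_cancel₀ (pow_ne_zero _ hc0ne), one_smul]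
          have hGdegree : G.degree = f.degree := by
            rw [degree_eq_natDegree hGne, degree_eq_natDegree h0, hGdeg, hf]
          obtain ⟨q1, hq1⟩ := hCp p j k hklt
          by_cases hr : f - G = 0
          · exact ⟨q1, by rw [hq1, ← hG, ← sub_eq_zero.mp hr]⟩
          · have hdlt : (f - G).degree < f.degree := degree_sub_lt hGdegree.symm h0 hGlc.symm
            have hnlt : (f - G).natDegree < d := by
              rw [← hf]
              exact natDegree_lt_natDegree hr hdlt
            obtain ⟨q2, hq2⟩ := IH _ hnlt (f - G) rfl
            exact ⟨q2 + q1, by rw [hadd, hq2, hq1, ← hG]; ring⟩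
    intro f
    obtain ⟨q, hq⟩ := main f.natDegree f rfl
    exact ⟨q, hq⟩

end
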